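/- With M the upper triangular 4×4 matrix diag-block [[1,0,0,0],[0,√(2pq/(p+q)), (p−q)/√(2pq(p+q)),0],[0,0,√((p+q)/(2pq)),0],[0,0,0,1]], the triangular R-matrix R = [[1,0,0,0],[0,2pq/(p+q),(p−q)/(p+q),0],[0,(q−p)/(p+q),2/(p+q),0],[0,0,0,1]] factorizes as R = ((21)M)⁻¹·M, where (21)M = P·M·P with P the flip matrix. -/

import Mathlib

set_option maxHeartbeats 1000000


open Matrix

noncomputable section

/-- The 4×4 flip (permutation) matrix swapping the middle two basis vectors. -/
def Pflip : Matrix (Fin 4) (Fin 4) ℝ :=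
  !![1, 0, 0, 0;
     0, 0, 1, 0;
     0, 1, 0, 0;
     0, 0, 0, 1]

theorem stmt14 (p q : ℝ) (hp : 0 < p) (hq : 0 < q) (hpq : p + q ≠ 0) :
    let s : ℝ := Real.sqrt (2 * p * q / (p + q))
    let M : Matrix (Fin 4) (Fin 4) ℝ :=
      !![1, 0, 0, 0;
         0, s, (p - q) / Real.sqrt (2 * p * q * (p + q)), 0;
         0, 0, 1 / s, 0;
         0, 0, 0, 1]
    let R : Matrix (Fin 4) (Fin 4) ℝ :=
      !![1, 0, 0, 0;
         0, 2 * p * q / (p + q), (p - q) / (p + q), 0;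
         0, (q - p) / (p + q), 2 / (p + q), 0;
         0, 0, 0, 1]
    R = (Pflip * M * Pflip)⁻¹ * M := by
  intro s M R
  have hpq' : 0 < p + q := by linarith
  have hspos : 0 < s := Real.sqrt_pos.mpr (by positivity)
  have hs : s ≠ 0 := ne_of_gt hspos
  have hs2 : s ^ 2 = 2 * p * q / (p + q) := Real.sq_sqrt (by positivity)
  have hs2' : s * s * (p + q) = 2 * p * q := by
    have := hs2
    field_simp at this
    linarith [this]
  have hb : Real.sqrt (2 * p * q * (p + q)) = s * (p + q) := by
    rw [show 2 * p * q * (p + q) = (2 * p * q / (p + q)) * (p + q) ^ 2 by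
      field_simp]
    rw [Real.sqrt_mul (by positivity), Real.sqrt_sq hpq'.le]
  clear_value s
  have key : (Pflip * M * Pflip) * R = M := by
    ext i j
    fin_cases i <;> fin_cases j <;>
      simp [Pflip, M, R, Matrix.mul_apply, Fin.sum_univ_four, hb,
        Matrix.vecHead, Matrix.vecTail]
    · field_simp
      linear_combination -hs2'
    · field_simp
    · field_simp
      linear_combination (q - p) * hs2'
    · field_simp
      linear_combination 2 * hs2'
  have hdetM : M.det = 1 := by
    simp [M, Matrix.det_succ_row_zero, Fin.sum_univ_succ]
    field_simp
  have hdetP : Pflip.det = -1 := by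
    simp [Pflip, Matrix.det_succ_row_zero, Fin.sum_univ_succ]
  have hdet : IsUnit (Pflip * M * Pflip).det := by
    rw [Matrix.det_mul, Matrix.det_mul, hdetM, hdetP]
    norm_num
  calc R = (Pflip * M * Pflip)⁻¹ * ((Pflip * M * Pflip) * R) :=
        (Matrix.nonsing_inv_mul_cancel_left _ _ hdet).symm
    _ = (Pflip * M * Pflip)⁻¹ * M := by rw [key]
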